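/- arXiv:2407.03832 — 4 statements merged into one kernel-verified Lean document; each statement's English description precedes it below -/
import Mathlib

section
/- Fix k ≥ 1. If the path graph P_n admits a burning sequence with exactly k sources, then n ≤ k² + 2k; moreover, the path graph P_{k²+2k} admits a burning sequence with exactly k sources. -/
open SimpleGraph

/-- The path graph `P_n` with vertices `1, …, n` (represented by `Fin n`,
vertex `i+1` corresponds to index `i`) and edges `{i, i+1}`. -/
def pathG (n : ℕ) : SimpleGraph (Fin n) where
  Adj v w := v.val + 1 = w.val ∨ w.val + 1 = v.val
  symm := ⟨by intro v w h; tauto⟩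
  loopless := ⟨by intro v h; rcases h with h | h <;> omega⟩

/-- `(s 0, …, s (k-1))` is a burning sequence of `G` (written `1`-based in the paper:
`d(v_i, v_j) ≥ j - i + 1` for `i < j`, and every vertex `v` satisfies
`d(v_i, v) ≤ k + 1 - i` for some `i`). Distances are `ℕ∞`-valued. -/
def IsBurningSeq {V : Type*} (G : SimpleGraph V) {k : ℕ} (s : Fin k → V) : Prop :=
  1 ≤ k ∧
  (∀ i j : Fin k, i < j → ((j.val - i.val + 1 : ℕ) : ℕ∞) ≤ G.edist (s i) (s j)) ∧
  (∀ v : V, ∃ i : Fin k, G.edist (s i) v ≤ ((k - i.val : ℕ) : ℕ∞))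

/-- The burning time function `λ(v) = min_{1 ≤ i ≤ k} (i + d(v_i, v))`. -/
noncomputable def burnTime {V : Type*} (G : SimpleGraph V) {k : ℕ} (s : Fin k → V)
    (v : V) : ℕ :=
  (⨅ i : Fin k, ((i.val + 1 : ℕ) : ℕ∞) + G.edist (s i) v).toNat

/-- The end time `T = max_{v ∈ V} λ(v)` of a burning. -/
noncomputable def endTime {V : Type*} [Fintype V] (G : SimpleGraph V) {k : ℕ}
    (s : Fin k → V) : ℕ :=
  Finset.univ.sup fun v => burnTime G s v

lemma pathG_walk_len {n : ℕ} {u v : Fin n} (p : (pathG n).Walk u v) :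
    Nat.dist u.val v.val ≤ p.length := by
  induction p with
  | nil => simp [Nat.dist]
  | @cons a b c h q ih =>
    have h' : a.val + 1 = b.val ∨ b.val + 1 = a.val := h
    simp only [Walk.length_cons]
    simp [Nat.dist] at ih ⊢
    omega

lemma pathG_edist_le_of {n : ℕ} : ∀ d (u v : Fin n), u.val + d = v.val →
    (pathG n).edist u v ≤ (d : ℕ∞) := by
  intro d
  induction d with
  | zero =>
    intro u v h
    have : u = v := Fin.ext (by omega)
    simp [this]
  | succ d ih =>
    intro u v h
    have hlt : u.val + 1 < n := by omega
    set w : Fin n := ⟨u.val + 1, by omega⟩ with hw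
    have hadj : (pathG n).Adj u w := Or.inl rfl
    have h1 : (pathG n).edist u w = 1 := edist_eq_one_iff_adj.mpr hadj
    calc (pathG n).edist u v ≤ (pathG n).edist u w + (pathG n).edist w v :=
          SimpleGraph.edist_triangle
      _ ≤ 1 + (d : ℕ∞) := by
          rw [h1]; gcongr; exact ih w v (by simp [hw]; omega)
      _ = ((d + 1 : ℕ) : ℕ∞) := by push_cast; ring

lemma pathG_edist {n : ℕ} (u v : Fin n) :
    (pathG n).edist u v = (Nat.dist u.val v.val : ℕ∞) := by
  apply le_antisymm
  · rcases le_total u.val v.val with h | h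
    · rw [Nat.dist_eq_sub_of_le h]
      exact pathG_edist_le_of _ u v (by omega)
    · rw [Nat.dist_eq_sub_of_le_right h, SimpleGraph.edist_comm]
      exact pathG_edist_le_of _ v u (by omega)
  · rw [SimpleGraph.edist_eq_sInf]
    apply le_sInf
    rintro x ⟨p, rfl⟩
    exact Nat.cast_le.mpr (pathG_walk_len p)

/-- Source positions for burning `P_{k²+2k}` with `k` sources. -/
def src (k : ℕ) : ℕ → ℕ
  | 0 => k
  | i + 1 => src k i + 2 * (k - i)

lemma srcval (k : ℕ) : ∀ i, i ≤ k → src k i + i * i = k + i + 2 * k * i := by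
  intro i
  induction i with
  | zero => simp [src]
  | succ m ih =>
    intro h
    have hm := ih (by omega)
    have he : src k (m + 1) = src k m + 2 * (k - m) := rfl
    have h2 : (m + 1) * (m + 1) = m * m + 2 * m + 1 := by ring
    have h3 : 2 * k * (m + 1) = 2 * k * m + 2 * k := by ring
    omega

lemma src_mono (k : ℕ) : ∀ j, j ≤ k → ∀ i, i ≤ j → src k i + 2 * (j - i) ≤ src k j := by
  intro j
  induction j with
  | zero => intro _ i hi; interval_cases i; simp
  | succ m ih =>
    intro hm i hi
    rcases Nat.eq_or_lt_of_le hi with h | h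
    · subst h; simp
    · have h1 := ih (by omega) i (by omega)
      have he : src k (m + 1) = src k m + 2 * (k - m) := rfl
      omega

lemma src_lt (k : ℕ) : ∀ i, i < k → src k i + (k - i) + 1 ≤ k ^ 2 + 2 * k := by
  intro i hi
  obtain ⟨d, rfl⟩ : ∃ d, k = i + d + 1 := ⟨k - i - 1, by omega⟩
  have hs := srcval (i + d + 1) i (by omega)
  have h1 : (i + d + 1) ^ 2 = i*i + d*d + 2*(i*d) + 2*i + 2*d + 1 := by ring
  have h5 : 2 * (i + d + 1) * i = 2*(i*i) + 2*(i*d) + 2*i := by ring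
  omega

lemma src_cover (k : ℕ) (hk : 1 ≤ k) : ∀ i, i < k → ∀ v, v < src k i + (k - i) + 1 →
    ∃ j, j < k ∧ Nat.dist (src k j) v ≤ k - j := by
  intro i
  induction i with
  | zero =>
    intro _ v hv
    refine ⟨0, hk, ?_⟩
    have h0 : src k 0 = k := rfl
    simp [Nat.dist, h0]
    omega
  | succ m ih =>
    intro hm v hv
    by_cases hc : v < src k m + (k - m) + 1
    · exact ih (by omega) v hc
    · refine ⟨m + 1, hm, ?_⟩
      have he : src k (m + 1) = src k m + 2 * (k - m) := rfl
      simp [Nat.dist]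
      omega

lemma sum_blocks (k : ℕ) : ∑ i ∈ Finset.range k, (2 * (k - i) + 1) = k ^ 2 + 2 * k := by
  induction k with
  | zero => simp
  | succ m ih =>
    rw [Finset.sum_range_succ]
    have h1 : ∑ i ∈ Finset.range m, (2 * (m + 1 - i) + 1)
        = ∑ i ∈ Finset.range m, ((2 * (m - i) + 1) + 2) := by
      refine Finset.sum_congr rfl fun i hi => ?_
      simp only [Finset.mem_range] at hi
      omega
    rw [h1, Finset.sum_add_distrib, ih, Finset.sum_const, Finset.card_range, smul_eq_mul]
    have h2 : (m + 1) ^ 2 = m ^ 2 + 2 * m + 1 := by ring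
    omega

/-- Fix `k ≥ 1`. If the path graph `P_n` admits a burning sequence
with exactly `k` sources then `n ≤ k² + 2k`; moreover `P_{k² + 2k}` admits a burning
sequence with exactly `k` sources. -/
theorem stmt_9 (k : ℕ) (hk : 1 ≤ k) :
    (∀ n : ℕ, (∃ s : Fin k → Fin n, IsBurningSeq (pathG n) s) → n ≤ k ^ 2 + 2 * k) ∧
    (∃ s : Fin k → Fin (k ^ 2 + 2 * k), IsBurningSeq (pathG (k ^ 2 + 2 * k)) s) := by
  constructor
  · rintro n ⟨s, -, -, hcov⟩
    choose f hf using hcov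
    have hd : ∀ v, Nat.dist (s (f v)).val v.val ≤ k - (f v).val := by
      intro v
      have := hf v
      rw [pathG_edist] at this
      exact_mod_cast this
    have gsnd : ∀ v : Fin n, v.val + (k - (f v).val) - (s (f v)).val < 2 * (k - (f v).val) + 1 := by
      intro v
      have := hd v
      simp [Nat.dist] at this
      omega
    set g : Fin n → Σ i : Fin k, Fin (2 * (k - i.val) + 1) :=
      fun v => ⟨f v, ⟨v.val + (k - (f v).val) - (s (f v)).val, gsnd v⟩⟩ with hg
    have hginj : Function.Injective g := by
      intro v w h
      have h1 : f v = f w := congrArg Sigma.fst h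
      have h2 : v.val + (k - (f v).val) - (s (f v)).val
          = w.val + (k - (f w).val) - (s (f w)).val :=
        congrArg (fun x : Σ i : Fin k, Fin (2 * (k - i.val) + 1) => x.2.val) h
      have hdv := hd v
      have hdw := hd w
      rw [h1] at hdv h2
      simp [Nat.dist] at hdv hdw
      exact Fin.ext (by omega)
    calc n = Fintype.card (Fin n) := (Fintype.card_fin n).symm
      _ ≤ Fintype.card (Σ i : Fin k, Fin (2 * (k - i.val) + 1)) :=
          Fintype.card_le_of_injective g hginj
      _ = ∑ i : Fin k, (2 * (k - i.val) + 1) := by simp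
      _ = ∑ i ∈ Finset.range k, (2 * (k - i) + 1) :=
          Fin.sum_univ_eq_sum_range (fun i => 2 * (k - i) + 1) k
      _ = k ^ 2 + 2 * k := sum_blocks k
  · have hlt : ∀ i : Fin k, src k i.val < k ^ 2 + 2 * k := by
      intro i
      have := src_lt k i.val i.isLt
      omega
    refine ⟨fun i => ⟨src k i.val, hlt i⟩, hk, ?_, ?_⟩
    · intro i j hij
      rw [pathG_edist]
      have hm := src_mono k j.val (le_of_lt j.isLt) i.val (le_of_lt hij)
      have hle : src k i.val ≤ src k j.val := by omega
      rw [Nat.dist_eq_sub_of_le hle]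
      have hij' : i.val < j.val := hij
      exact Nat.cast_le.mpr (by omega)
    · intro v
      have hn : v.val < src k (k - 1) + (k - (k - 1)) + 1 := by
        obtain ⟨m, rfl⟩ : ∃ m, k = m + 1 := ⟨k - 1, by omega⟩
        have hs := srcval (m + 1) m (by omega)
        have h1 : 2 * (m + 1) * m = 2 * (m * m) + 2 * m := by ring
        have h2 : (m + 1) ^ 2 = m * m + 2 * m + 1 := by ring
        have h3 := v.isLt
        simp only [Nat.add_sub_cancel] at *
        omega
      obtain ⟨j, hj, hdj⟩ := src_cover k hk (k - 1) (by omega) v.val hn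
      refine ⟨⟨j, hj⟩, ?_⟩
      rw [pathG_edist]
      exact Nat.cast_le.mpr hdj
end

section
/- For every n ≥ 1, the burning number of the path graph P_n equals ⌈√n⌉: the minimum, over all burnings of P_n, of the end time T is exactly the smallest integer greater than or equal to √n. -/
open SimpleGraph

section Aux

/-! ### Distance in the path graph -/

lemma pathG_edist_le {n : ℕ} (d : ℕ) (u v : Fin n) (h : u.val + d = v.val) :
    (pathG n).edist u v ≤ (d : ℕ∞) := by
  induction d generalizing u with
  | zero =>
    have : u = v := Fin.ext (by omega)
    simp [this, SimpleGraph.edist_self]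
  | succ d ih =>
    have hv : u.val + 1 < n := by omega
    set u' : Fin n := ⟨u.val + 1, hv⟩ with hu'
    have hadj : (pathG n).Adj u u' := Or.inl rfl
    have h1 : (pathG n).edist u u' ≤ 1 := by
      rw [SimpleGraph.edist_eq_one_iff_adj.mpr hadj]
    calc (pathG n).edist u v ≤ (pathG n).edist u u' + (pathG n).edist u' v :=
          SimpleGraph.edist_triangle
      _ ≤ 1 + (d : ℕ∞) := add_le_add h1 (ih u' (by simp [hu']; omega))
      _ = ((d + 1 : ℕ) : ℕ∞) := by push_cast; ring

lemma pathG_walk_length {n : ℕ} {u v : Fin n} (p : (pathG n).Walk u v) :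
    (Nat.dist u.val v.val : ℕ) ≤ p.length := by
  induction p with
  | nil => simp
  | cons hadj p ih =>
    rename_i a b c
    have : Nat.dist a.val b.val = 1 := by
      rcases hadj with h | h <;> simp [Nat.dist] <;> omega
    have htri := Nat.dist.triangle_inequality a.val b.val c.val
    simp only [Walk.length_cons]
    omega

/-! ### Lower bound -/

lemma odd_sum (T : ℕ) : ∑ i ∈ Finset.range T, (2*i+1) = T*T := by
  induction T with
  | zero => simp
  | succ T ih => rw [Finset.sum_range_succ, ih]; ring

lemma burn_lower {n k : ℕ} (s : Fin k → Fin n) (hb : IsBurningSeq (pathG n) s) :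
    n ≤ (endTime (pathG n) s) * (endTime (pathG n) s) := by
  classical
  obtain ⟨hk, _hsep, _hcov⟩ := hb
  set T := endTime (pathG n) s with hT
  have key : ∀ v : Fin n, ∃ i : Fin k, i.val + 1 + Nat.dist (s i).val v.val ≤ T := by
    intro v
    have hBT : burnTime (pathG n) s v ≤ T := Finset.le_sup (Finset.mem_univ v)
    haveI : Nonempty (Fin k) := ⟨⟨0, hk⟩⟩
    obtain ⟨i, hi⟩ := Finite.exists_min
      (fun i : Fin k => ((i.val + 1 : ℕ) : ℕ∞) + (pathG n).edist (s i) v)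
    have hinf : (⨅ j : Fin k, ((j.val + 1 : ℕ) : ℕ∞) + (pathG n).edist (s j) v)
        = ((i.val + 1 : ℕ) : ℕ∞) + (pathG n).edist (s i) v :=
      le_antisymm (iInf_le _ i) (le_iInf hi)
    refine ⟨i, ?_⟩
    have : burnTime (pathG n) s v = i.val + 1 + Nat.dist (s i).val v.val := by
      rw [burnTime, hinf, pathG_edist]
      push_cast
      exact_mod_cast ENat.toNat_coe _
    omega
  let B : Fin k → Finset (Fin n) :=
    fun i => Finset.univ.filter (fun v : Fin n => i.val + 1 + Nat.dist (s i).val v.val ≤ T)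
  have hsub : (Finset.univ : Finset (Fin n)) ⊆ Finset.univ.biUnion B := by
    intro v _
    rw [Finset.mem_biUnion]
    obtain ⟨i, hi⟩ := key v
    exact ⟨i, Finset.mem_univ i, by simp [B, hi]⟩
  have h1 : n ≤ ∑ i : Fin k, (B i).card := by
    calc n = (Finset.univ : Finset (Fin n)).card := by simp
      _ ≤ (Finset.univ.biUnion B).card := Finset.card_le_card hsub
      _ ≤ ∑ i : Fin k, (B i).card := Finset.card_biUnion_le
  have hball : ∀ i : Fin k, (B i).card ≤ (if i.val + 1 ≤ T then 2*(T - 1 - i.val) + 1 else 0) := by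
    intro i
    by_cases h : i.val + 1 ≤ T
    · rw [if_pos h]
      set c := (s i).val
      set r := T - 1 - i.val
      have hcard : (B i).card ≤ (Finset.Icc (c - r) (c + r)).card := by
        apply Finset.card_le_card_of_injOn (fun v : Fin n => v.val)
        · intro v hv
          simp only [B, Finset.mem_filter, Finset.mem_univ, true_and] at hv
          simp only [Nat.dist] at hv
          simp only [Finset.mem_coe, Finset.mem_filter, Finset.mem_univ, true_and, Finset.mem_Icc] at hv ⊢
          have hv' := (Finset.mem_filter.mp hv).2
          omega
        · exact Fin.val_injective.injOn
      rw [Nat.card_Icc] at hcard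
      omega
    · rw [if_neg h]
      have : B i = ∅ := by
        apply Finset.eq_empty_of_forall_notMem
        intro v hv
        simp only [B, Finset.mem_filter, Finset.mem_univ, true_and] at hv
        omega
      simp [this]
  have h2 : ∑ i : Fin k, (B i).card ≤
      ∑ i ∈ Finset.range k, (if i + 1 ≤ T then 2*(T - 1 - i) + 1 else 0) := by
    rw [← Fin.sum_univ_eq_sum_range]
    exact Finset.sum_le_sum (fun i _ => hball i)
  have h3 : ∑ i ∈ Finset.range k, (if i + 1 ≤ T then 2*(T - 1 - i) + 1 else 0) ≤ T * T := by
    set g : ℕ → ℕ := fun i => if i + 1 ≤ T then 2*(T - 1 - i) + 1 else 0 with hg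
    calc ∑ i ∈ Finset.range k, g i
        ≤ ∑ i ∈ Finset.range (max k T), g i :=
          Finset.sum_le_sum_of_subset (Finset.range_subset_range.mpr (le_max_left _ _))
      _ = ∑ i ∈ Finset.range T, g i := by
          refine (Finset.sum_subset (Finset.range_subset_range.mpr (le_max_right _ _)) ?_).symm
          intro x _ hx
          rw [Finset.mem_range] at hx
          simp only [g]
          rw [if_neg (by omega)]
      _ = ∑ i ∈ Finset.range T, (2*(T - 1 - i) + 1) := by
          apply Finset.sum_congr rfl
          intro x hx
          rw [Finset.mem_range] at hx
          simp only [g]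
          rw [if_pos (by omega)]
      _ = ∑ i ∈ Finset.range T, (2*i + 1) := Finset.sum_range_reflect (fun i => 2*i+1) T
      _ = T * T := odd_sum T
  omega

lemma le_of_sq {m T n : ℕ} (h1 : (m-1)*(m-1) < n) (h2 : n ≤ T*T) : m ≤ T := by
  by_contra h
  push_neg at h
  have hT : T ≤ m - 1 := by omega
  have := Nat.mul_le_mul hT hT
  omega

lemma end_eq {n m k : ℕ} (s : Fin k → Fin n) (hb : IsBurningSeq (pathG n) s)
    (hle : endTime (pathG n) s ≤ m) (hm1 : (m-1)*(m-1) < n) :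
    endTime (pathG n) s = m := by
  have h := burn_lower s hb
  have := le_of_sq hm1 h
  omega

/-! ### Construction -/

def burnC (n m i : ℕ) : ℕ := max (n - m - i*(2*m - 1 - i)) (2*(m - 1 - i))

lemma burnC_step {m i : ℕ} (h : i + 2 ≤ m) :
    (i+1)*(2*m - 1 - (i+1)) = i*(2*m - 1 - i) + 2*(m - 1 - i) := by
  obtain ⟨p, rfl⟩ : ∃ p, m = i + 2 + p := ⟨m - (i+2), by omega⟩
  have e1 : 2*(i+2+p) - 1 - (i+1) = i + 2 + 2*p := by omega
  have e2 : 2*(i+2+p) - 1 - i = i + 3 + 2*p := by omega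
  have e3 : (i+2+p) - 1 - i = 1 + p := by omega
  rw [e1, e2, e3]; ring

lemma burnC_gap {n m i : ℕ} (h : i + 2 ≤ m) :
    burnC n m (i+1) + 2 ≤ burnC n m i := by
  have hs := burnC_step (m := m) (i := i) h
  unfold burnC
  rw [hs]
  omega

lemma burnC_consec {n m i : ℕ} (h : i + 2 ≤ m) :
    burnC n m i ≤ burnC n m (i+1) + 2*(m - 1 - i) := by
  have hs := burnC_step (m := m) (i := i) h
  unfold burnC
  rw [hs]
  omega

lemma burnC_gaps {n m : ℕ} (i : ℕ) : ∀ j, i < j → j < m →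
    burnC n m j + 2*(j - i) ≤ burnC n m i := by
  intro j
  induction j with
  | zero => omega
  | succ j ih =>
    intro hij hj
    rcases Nat.lt_or_ge i j with h | h
    · have h1 := ih h (by omega)
      have h2 := burnC_gap (n := n) (m := m) (i := j) (by omega)
      omega
    · have : i = j := by omega
      subst this
      have h2 := burnC_gap (n := n) (m := m) (i := i) (by omega)
      omega

lemma burnC_last {n m : ℕ} (h1 : 1 ≤ m) (hn : n ≤ m*m) : burnC n m (m-1) = 0 := by
  obtain ⟨q, rfl⟩ : ∃ q, m = q + 1 := ⟨m - 1, by omega⟩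
  have e1 : (q+1) - 1 = q := by omega
  have e2 : 2*(q+1) - 1 - q = q + 1 := by omega
  have e3 : q*(q+1) + (q+1) = (q+1)*(q+1) := by ring
  unfold burnC
  rw [e1, e2]
  omega

lemma burnC_cover {n m : ℕ} (h1 : 1 ≤ m) (hn : n ≤ m*m) :
    ∀ d, d < m → ∀ v, v ≤ burnC n m (m-1-d) + d →
    ∃ j, j < m ∧ Nat.dist (burnC n m j) v ≤ m - 1 - j := by
  intro d
  induction d with
  | zero =>
    intro _ v hv
    rw [Nat.sub_zero, burnC_last h1 hn] at hv
    refine ⟨m - 1, by omega, ?_⟩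
    rw [burnC_last h1 hn]
    simp [Nat.dist]
    omega
  | succ d ih =>
    intro hd v hv
    set i := m - 1 - (d+1) with hi
    by_cases hc : burnC n m i ≤ v + (d+1)
    · refine ⟨i, by omega, ?_⟩
      have : m - 1 - i = d + 1 := by omega
      rw [this]
      simp [Nat.dist]
      omega
    · push_neg at hc
      have hcons := burnC_consec (n := n) (m := m) (i := i) (by omega)
      have hii : i + 1 = m - 1 - d := by omega
      have hmd : m - 1 - i = d + 1 := by omega
      rw [hmd, hii] at hcons
      exact ih (by omega) v (by omega)

lemma burnC_lt {n m i : ℕ} (h1 : 1 ≤ n) (hm : 2*m ≤ n + 1) (hmi : i < m) :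
    burnC n m i < n := by
  unfold burnC
  have : n - m - i*(2*m - 1 - i) ≤ n - m := by omega
  omega

lemma burnC_zero {n m : ℕ} : n - m ≤ burnC n m 0 := by
  unfold burnC
  omega

end Aux

/-- For every `n ≥ 1`, the burning number of the path graph `P_n`
equals `⌈√n⌉`: the least end time over all burnings of `P_n` is `⌈√n⌉`. -/
theorem stmt_11 (n : ℕ) (hn : 1 ≤ n) :
    IsLeast {T : ℕ | ∃ (k : ℕ) (s : Fin k → Fin n),
        IsBurningSeq (pathG n) s ∧ endTime (pathG n) s = T}
      ⌈Real.sqrt n⌉₊ := by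
  set m := ⌈Real.sqrt n⌉₊ with hmdef
  -- basic facts about m
  have hm0 : 1 ≤ m := Nat.ceil_pos.mpr (Real.sqrt_pos.mpr (by exact_mod_cast hn))
  have hm2 : n ≤ m * m := by
    have h := Nat.le_ceil (Real.sqrt n)
    have h2 : Real.sqrt n * Real.sqrt n ≤ (m : ℝ) * m :=
      mul_self_le_mul_self (Real.sqrt_nonneg _) h
    rw [Real.mul_self_sqrt (by positivity)] at h2
    exact_mod_cast h2
  have hm1 : (m - 1) * (m - 1) < n := by
    have h : ((m - 1 : ℕ) : ℝ) < Real.sqrt n := Nat.lt_ceil.mp (by omega)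
    have h2 : ((m - 1 : ℕ) : ℝ) * ((m - 1 : ℕ) : ℝ) < Real.sqrt n * Real.sqrt n :=
      mul_self_lt_mul_self (by positivity) h
    rw [Real.mul_self_sqrt (by positivity)] at h2
    exact_mod_cast h2
  constructor
  · -- membership: construct a burning with end time m
    rcases eq_or_ne n 2 with rfl | hn2
    · -- special case n = 2
      have hm : m = 2 := by
        rcases Nat.lt_or_ge m 2 with h | h
        · interval_cases m <;> omega
        · rcases Nat.lt_or_ge m 3 with h' | h'
          · omega
          · exfalso
            have h2 : 2 ≤ m - 1 := by omega
            have : 2*2 ≤ (m-1)*(m-1) := Nat.mul_le_mul h2 h2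
            omega
      refine ⟨1, fun _ => ⟨0, by omega⟩, ?_, ?_⟩
      · refine ⟨le_refl 1, ?_, ?_⟩
        · intro i j hij
          rw [Fin.lt_def] at hij
          have h1 := i.isLt
          have h2 := j.isLt
          omega
        · intro v
          refine ⟨0, ?_⟩
          rw [pathG_edist]
          have : Nat.dist (0 : ℕ) v.val ≤ 1 := by simp [Nat.dist]; omega
          exact_mod_cast Nat.cast_le.mpr this
      · have hb : IsBurningSeq (pathG 2) (fun _ : Fin 1 => (⟨0, by omega⟩ : Fin 2)) := by
          refine ⟨le_refl 1, ?_, ?_⟩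
          · intro i j hij
            exact absurd (Fin.val_lt_of_le j (le_refl 1)) (by omega)
          · intro v
            refine ⟨0, ?_⟩
            rw [pathG_edist]
            have : Nat.dist (0 : ℕ) v.val ≤ 1 := by simp [Nat.dist]; omega
            exact_mod_cast Nat.cast_le.mpr this
        rw [hm]
        apply end_eq _ hb _ (by omega)
        apply Finset.sup_le
        intro v _
        rw [burnTime]
        apply ENat.toNat_le_of_le_coe
        refine le_trans (iInf_le _ 0) ?_
        rw [pathG_edist]
        have : 0 + 1 + Nat.dist (0 : ℕ) v.val ≤ 2 := by simp [Nat.dist]; omega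
        exact_mod_cast Nat.cast_le.mpr this
    · -- general case n ≠ 2
      have hn3 : 2 * m ≤ n + 1 := by
        rcases Nat.lt_or_ge m 3 with h | h
        · interval_cases m <;> omega
        · have : 2 * (m - 1) ≤ (m - 1) * (m - 1) := Nat.mul_le_mul (by omega) (le_refl _)
          omega
      set s : Fin m → Fin n := fun i => ⟨burnC n m i.val, burnC_lt hn hn3 i.isLt⟩ with hs
      have hcov : ∀ v : Fin n, ∃ j, j < m ∧ Nat.dist (burnC n m j) v.val ≤ m - 1 - j := by
        intro v
        apply burnC_cover hm0 hm2 (m - 1) (by omega)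
        rw [Nat.sub_self]
        have h0 := burnC_zero (n := n) (m := m)
        have hnm : m ≤ n := by
          rcases Nat.lt_or_ge m 2 with h | h
          · omega
          · have : m - 1 ≤ (m-1)*(m-1) := Nat.le_mul_of_pos_left _ (by omega)
            omega
        have := v.isLt
        omega
      have hb : IsBurningSeq (pathG n) s := by
        refine ⟨hm0, ?_, ?_⟩
        · intro i j hij
          rw [pathG_edist]
          apply Nat.cast_le.mpr
          have hg := burnC_gaps (n := n) (m := m) i.val j.val hij j.isLt
          simp only [hs, Nat.dist]
          omega
        · intro v
          obtain ⟨j, hj, hd⟩ := hcov v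
          refine ⟨⟨j, hj⟩, ?_⟩
          rw [pathG_edist]
          apply Nat.cast_le.mpr
          simp only [hs]
          omega
      refine ⟨m, s, hb, ?_⟩
      apply end_eq _ hb _ hm1
      apply Finset.sup_le
      intro v _
      rw [burnTime]
      apply ENat.toNat_le_of_le_coe
      obtain ⟨j, hj, hd⟩ := hcov v
      refine le_trans (iInf_le _ ⟨j, hj⟩) ?_
      rw [pathG_edist]
      have : j + 1 + Nat.dist (s ⟨j, hj⟩).val v.val ≤ m := by
        simp only [hs]
        omega
      exact_mod_cast Nat.cast_le.mpr this
  · -- lower bound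
    rintro T ⟨k, s, hb, rfl⟩
    exact le_of_sq hm1 (burn_lower s hb)
end

section
/- Let G and H be finite simple graphs, let (v_1, …, v_k) be a burning sequence of G with time function λ_G and end time T_G, and let (w_1, …, w_m) be a burning sequence of H with time function λ_H and end time T_H, where k ≤ m. Let f : G → H be a graph map with f(v_i) = w_i for 1 ≤ i ≤ k, and let τ : {1, …, T_G} → {1, …, T_H} be a graph map of path graphs such that τ(λ_G(v)) = λ_H(f(v)) for every vertex v of G. If T_G = k, then τ(i) = i for every i with 1 ≤ i ≤ T_G, i.e. τ is an inclusion. -/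
open SimpleGraph

lemma burnTime_seq {V : Type*} (G : SimpleGraph V) {k : ℕ} (s : Fin k → V)
    (hs : IsBurningSeq G s) (i : Fin k) : burnTime G s (s i) = i.val + 1 := by
  have h : (⨅ j : Fin k, ((j.val + 1 : ℕ) : ℕ∞) + G.edist (s j) (s i))
      = ((i.val + 1 : ℕ) : ℕ∞) := by
    apply le_antisymm
    · refine le_trans (iInf_le _ i) ?_
      simp [SimpleGraph.edist_self]
    · refine le_iInf fun j => ?_
      rcases lt_trichotomy j i with hji | hji | hji
      · have := hs.2.1 j i hji
        calc ((i.val + 1 : ℕ) : ℕ∞) ≤ ((j.val + 1 : ℕ) : ℕ∞)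
              + ((i.val - j.val + 1 : ℕ) : ℕ∞) := by
                rw [← Nat.cast_add, Nat.cast_le]
                omega
          _ ≤ _ := add_le_add (le_refl _) this
      · subst hji; simp [SimpleGraph.edist_self]
      · calc ((i.val + 1 : ℕ) : ℕ∞) ≤ ((j.val + 1 : ℕ) : ℕ∞) := by
              rw [Nat.cast_le]; omega
          _ ≤ _ := le_add_of_nonneg_right zero_le
  rw [burnTime, h, ENat.toNat_coe]

/-- Let `f : G → H` be a graph map carrying a burning sequence
`(v_1, …, v_k)` of `G` (with time function `λ_G` and end time `T_G`) into a burning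
sequence `(w_1, …, w_m)` of `H` (with time function `λ_H` and end time `T_H`), i.e.
`k ≤ m` and `f(v_i) = w_i` for `1 ≤ i ≤ k`, and let `τ : {1, …, T_G} → {1, …, T_H}`
be a graph map of path graphs with `τ ∘ λ_G = λ_H ∘ f`. If `T_G = k` then
`τ(i) = i` for all `1 ≤ i ≤ T_G`, i.e. `τ` is an inclusion. -/
theorem stmt_14 {V W : Type*} [Fintype V] [Fintype W]
    (G : SimpleGraph V) (H : SimpleGraph W)
    {k m : ℕ} (s : Fin k → V) (t : Fin m → W)
    (hs : IsBurningSeq G s) (ht : IsBurningSeq H t) (hkm : k ≤ m)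
    (f : V → W)
    (hf : ∀ v w : V, G.Adj v w → f v = f w ∨ H.Adj (f v) (f w))
    (hfs : ∀ i : Fin k, f (s i) = t (Fin.castLE hkm i))
    (τ : ℕ → ℕ)
    (hτ1 : ∀ i : ℕ, 1 ≤ i → i ≤ endTime G s → 1 ≤ τ i ∧ τ i ≤ endTime H t)
    (hτ2 : ∀ i : ℕ, 1 ≤ i → i + 1 ≤ endTime G s →
      τ (i + 1) = τ i ∨ τ (i + 1) = τ i + 1 ∨ τ i = τ (i + 1) + 1)
    (hcomm : ∀ v : V, τ (burnTime G s v) = burnTime H t (f v))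
    (hTk : endTime G s = k) :
    ∀ i : ℕ, 1 ≤ i → i ≤ endTime G s → τ i = i := by
  intro i h1 h2
  rw [hTk] at h2
  set j : Fin k := ⟨i - 1, by omega⟩ with hj
  have hG : burnTime G s (s j) = i := by
    rw [burnTime_seq G s hs j]; simp [hj]; omega
  have hH : burnTime H t (f (s j)) = i := by
    rw [hfs j, burnTime_seq H t ht]; simp [hj, Fin.castLE]; omega
  have := hcomm (s j)
  rw [hG, hH] at this
  exact this
end

section
/- Let G be a finite tree (a connected acyclic finite simple graph) and let H be a connected subgraph of G (hence also a tree). Then G is a burning extension of H: for every burning sequence of H (with distances computed in H) there exists a burning sequence of G whose set of sources contains the set of sources of the given burning sequence of H. -/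
open SimpleGraph

/-- Lift: a `G`-walk whose edges all lie in `H` gives an upper bound on `H.coe.edist`. -/
lemma lift_edist_le {V : Type*} {G : SimpleGraph V} (H : G.Subgraph) :
    ∀ {a b : V} (p : G.Walk a b), (∀ e ∈ p.edges, e ∈ H.edgeSet) →
      ∀ (ha : a ∈ H.verts) (hb : b ∈ H.verts),
      H.coe.edist ⟨a, ha⟩ ⟨b, hb⟩ ≤ (p.length : ℕ∞) := by
  intro a b p
  induction p with
  | nil =>
    intro _ ha hb
    simp [SimpleGraph.edist_self]
  | @cons a c b h q ih =>
    intro he ha hb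
    have hac : H.Adj a c := by
      have : s(a, c) ∈ H.edgeSet := he _ (by simp)
      exact this
    have hc : c ∈ H.verts := H.edge_vert hac.symm
    have hadj : H.coe.Adj ⟨a, ha⟩ ⟨c, hc⟩ := hac
    have h1 : H.coe.edist ⟨a, ha⟩ ⟨c, hc⟩ ≤ 1 := by
      simpa using SimpleGraph.edist_le hadj.toWalk
    have h2 := ih (fun e he' => he _ (by simp [he'])) hc hb
    calc H.coe.edist ⟨a, ha⟩ ⟨b, hb⟩
        ≤ H.coe.edist ⟨a, ha⟩ ⟨c, hc⟩ + H.coe.edist ⟨c, hc⟩ ⟨b, hb⟩ :=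
          SimpleGraph.edist_triangle
      _ ≤ 1 + (q.length : ℕ∞) := add_le_add h1 h2
      _ = ((q.cons h).length : ℕ∞) := by
          rw [SimpleGraph.Walk.length_cons]; push_cast; ring

/-- In a tree, distance within a connected subgraph is at most the ambient distance. -/
lemma subgraph_edist_le {V : Type*} {G : SimpleGraph V} (hG : G.IsTree)
    {H : G.Subgraph} (hH : H.Connected) (u v : H.verts) :
    H.coe.edist u v ≤ G.edist (u : V) (v : V) := by
  classical
  obtain ⟨w⟩ := hH.coe u v
  have hmem : ∀ e ∈ (w.map H.hom).bypass.edges, e ∈ H.edgeSet := by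
    intro e hee
    have : e ∈ (w.map H.hom).edges := SimpleGraph.Walk.edges_bypass_subset _ hee
    rw [SimpleGraph.Walk.edges_map, List.mem_map] at this
    obtain ⟨e', he', rfl⟩ := this
    induction e' using Sym2.ind with
    | _ x y =>
      have hxy : H.coe.Adj x y := w.adj_of_mem_edges he'
      rw [Sym2.map_pair_eq]
      exact hxy
  obtain ⟨q, hq⟩ := (hG.isConnected (u : V) (v : V)).exists_walk_length_eq_edist
  have huniq := hG.existsUnique_path (u : V) (v : V)
  have heq : (w.map H.hom).bypass = q.bypass :=
    (huniq.unique ((w.map H.hom).bypass_isPath) (q.bypass_isPath))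
  have hlen : ((w.map H.hom).bypass.length : ℕ∞) ≤ G.edist (u : V) (v : V) := by
    rw [heq, ← hq]
    exact_mod_cast Nat.cast_le.mpr (q.length_bypass_le)
  calc H.coe.edist u v ≤ ((w.map H.hom).bypass.length : ℕ∞) := by
        simpa using lift_edist_le H (w.map H.hom).bypass hmem u.2 v.2
    _ ≤ G.edist (u : V) (v : V) := hlen

/-- Extension lemma: any sequence satisfying the separation condition extends to a
burning sequence by repeatedly appending uncovered vertices. -/
lemma extend_burning {V : Type*} [Fintype V] (G : SimpleGraph V) :
    ∀ (n k : ℕ) (s : Fin k → V), Fintype.card V ≤ k + n → 1 ≤ k →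
      (∀ i j : Fin k, i < j → ((j.val - i.val + 1 : ℕ) : ℕ∞) ≤ G.edist (s i) (s j)) →
      ∃ (k' : ℕ) (s' : Fin k' → V), IsBurningSeq G s' ∧
        ∀ i : Fin k, ∃ j : Fin k', s' j = s i := by
  classical
  intro n
  induction n with
  | zero =>
    intro k s hcard h1 h2
    by_cases hcov : ∀ v : V, ∃ i : Fin k, G.edist (s i) v ≤ ((k - i.val : ℕ) : ℕ∞)
    · exact ⟨k, s, ⟨h1, h2, hcov⟩, fun i => ⟨i, rfl⟩⟩
    · exfalso
      push_neg at hcov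
      obtain ⟨v, hv⟩ := hcov
      -- s is injective and v is not in its range, so card V ≥ k + 1
      have hinj : Function.Injective s := by
        intro i j hij
        by_contra hne
        rcases lt_or_gt_of_ne hne with h | h
        · have h' := h2 i j h
          rw [hij, SimpleGraph.edist_self] at h'
          simp at h'
        · have h' := h2 j i h
          rw [hij, SimpleGraph.edist_self] at h'
          simp at h'
      have hvnot : ∀ i, s i ≠ v := by
        intro i hiv
        have h' := hv i
        rw [hiv, SimpleGraph.edist_self] at h'
        simp at h'
      have : Fintype.card V ≥ k + 1 := by
        have : (Finset.univ.image s).card = k := by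
          rw [Finset.card_image_of_injective _ hinj, Finset.card_univ, Fintype.card_fin]
        have hsub : insert v (Finset.univ.image s) ⊆ Finset.univ := Finset.subset_univ _
        have hcd : (insert v (Finset.univ.image s)).card = k + 1 := by
          rw [Finset.card_insert_of_notMem, this]
          simp only [Finset.mem_image, not_exists]
          intro i hi
          exact hvnot i hi.2
        calc k + 1 = (insert v (Finset.univ.image s)).card := hcd.symm
          _ ≤ Finset.univ.card := Finset.card_le_card hsub
          _ = Fintype.card V := Finset.card_univ
      omega
  | succ n ih =>
    intro k s hcard h1 h2
    by_cases hcov : ∀ v : V, ∃ i : Fin k, G.edist (s i) v ≤ ((k - i.val : ℕ) : ℕ∞)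
    · exact ⟨k, s, ⟨h1, h2, hcov⟩, fun i => ⟨i, rfl⟩⟩
    · push_neg at hcov
      obtain ⟨v, hv⟩ := hcov
      have hv' : ∀ i : Fin k, ((k - i.val + 1 : ℕ) : ℕ∞) ≤ G.edist (s i) v := by
        intro i
        have h' := hv i
        rw [Nat.cast_add, Nat.cast_one]
        exact Order.add_one_le_of_lt h'
      set s' : Fin (k + 1) → V := fun i => if h : i.val < k then s ⟨i.val, h⟩ else v with hs'
      have h2' : ∀ i j : Fin (k+1), i < j →
          ((j.val - i.val + 1 : ℕ) : ℕ∞) ≤ G.edist (s' i) (s' j) := by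
        intro i j hij
        have hik : i.val < k := by omega
        by_cases hjk : j.val < k
        · have : s' i = s ⟨i.val, hik⟩ := dif_pos hik
          have hj : s' j = s ⟨j.val, hjk⟩ := dif_pos hjk
          rw [this, hj]
          exact h2 ⟨i.val, hik⟩ ⟨j.val, hjk⟩ hij
        · have hjv : j.val = k := by omega
          have : s' j = v := by rw [hs']; simp only; rw [dif_neg (by omega)]
          have hi : s' i = s ⟨i.val, hik⟩ := dif_pos hik
          rw [this, hi, hjv]
          exact hv' ⟨i.val, hik⟩
      obtain ⟨k', t', ht', hsub⟩ := ih (k+1) s' (by omega) (by omega) h2'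
      refine ⟨k', t', ht', fun i => ?_⟩
      obtain ⟨j, hj⟩ := hsub ⟨i.val, by omega⟩
      refine ⟨j, ?_⟩
      rw [hj, hs']
      simp only
      rw [dif_pos i.isLt]


/-- Let `G` be a finite tree and `H` a connected subgraph of `G`
(hence a tree). Then `G` is a burning extension of `H`: for every burning sequence
of `H` (distances computed within `H`) there is a burning sequence of `G` whose set
of sources contains the set of sources of the given sequence. -/
theorem stmt_18 {V : Type*} [Fintype V] (G : SimpleGraph V) (hG : G.IsTree)
    (H : G.Subgraph) (hH : H.Connected)
    {m : ℕ} (t : Fin m → H.verts) (ht : IsBurningSeq H.coe t) :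
    ∃ (k : ℕ) (s : Fin k → V), IsBurningSeq G s ∧
      ∀ i : Fin m, ∃ j : Fin k, s j = (t i : V) := by
  obtain ⟨h1, h2, _⟩ := ht
  exact extend_burning G (Fintype.card V) m (fun i => (t i : V)) (by omega) h1
    (fun i j hij => le_trans (h2 i j hij) (subgraph_edist_le hG hH (t i) (t j)))
end
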